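/- Fix r > 0, m ∈ ℝ and σ² > 0, and let μ be the Gaussian measure on ℝ with mean m and variance σ². Then the function s ↦ μ([s − r, s]) / μ((−∞, s]) is strictly decreasing on ℝ: for all reals s₁ < s₂ one has μ([s₂ − r, s₂]) / μ((−∞, s₂]) < μ([s₁ − r, s₁]) / μ((−∞, s₁]). -/

import Mathlib

open MeasureTheory ProbabilityTheory Set Real

section Aux

variable (m : ℝ) (σsq : NNReal)

/-- TP2 property of the Gaussian kernel. -/
lemma gauss_tp2_le (hσ : 0 < σsq) (r : ℝ) (hr : 0 < r) {u v : ℝ} (h : u ≤ v) :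
    gaussianPDFReal m σsq (u - r) * gaussianPDFReal m σsq v
      ≤ gaussianPDFReal m σsq u * gaussianPDFReal m σsq (v - r) := by
  have hσ' : (0:ℝ) < (σsq : ℝ) := hσ
  simp only [gaussianPDFReal]
  set c := (√(2 * π * (σsq:ℝ)))⁻¹ with hc
  have hc0 : (0:ℝ) ≤ c * c := by positivity
  have hE : rexp (-(u - r - m) ^ 2 / (2 * σsq)) * rexp (-(v - m) ^ 2 / (2 * σsq))
      ≤ rexp (-(u - m) ^ 2 / (2 * σsq)) * rexp (-(v - r - m) ^ 2 / (2 * σsq)) := by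
    rw [← Real.exp_add, ← Real.exp_add]
    refine Real.exp_le_exp.mpr ?_
    rw [← add_div, ← add_div, div_le_div_iff₀ (by positivity) (by positivity)]
    nlinarith [mul_nonneg hr.le (sub_nonneg.mpr h)]
  calc c * rexp (-(u - r - m) ^ 2 / (2 * σsq)) * (c * rexp (-(v - m) ^ 2 / (2 * σsq)))
      = c * c * (rexp (-(u - r - m) ^ 2 / (2 * σsq)) * rexp (-(v - m) ^ 2 / (2 * σsq))) := by ring
    _ ≤ c * c * (rexp (-(u - m) ^ 2 / (2 * σsq)) * rexp (-(v - r - m) ^ 2 / (2 * σsq))) :=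
        mul_le_mul_of_nonneg_left hE hc0
    _ = c * rexp (-(u - m) ^ 2 / (2 * σsq)) * (c * rexp (-(v - r - m) ^ 2 / (2 * σsq))) := by ring

lemma gauss_tp2_lt (hσ : 0 < σsq) (r : ℝ) (hr : 0 < r) {u v : ℝ} (h : u < v) :
    gaussianPDFReal m σsq (u - r) * gaussianPDFReal m σsq v
      < gaussianPDFReal m σsq u * gaussianPDFReal m σsq (v - r) := by
  have hσ' : (0:ℝ) < (σsq : ℝ) := hσ
  simp only [gaussianPDFReal]
  set c := (√(2 * π * (σsq:ℝ)))⁻¹ with hc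
  have hc0 : (0:ℝ) < c * c := by positivity
  have hE : rexp (-(u - r - m) ^ 2 / (2 * σsq)) * rexp (-(v - m) ^ 2 / (2 * σsq))
      < rexp (-(u - m) ^ 2 / (2 * σsq)) * rexp (-(v - r - m) ^ 2 / (2 * σsq)) := by
    rw [← Real.exp_add, ← Real.exp_add]
    refine Real.exp_lt_exp.mpr ?_
    rw [← add_div, ← add_div, div_lt_div_iff₀ (by positivity) (by positivity)]
    nlinarith [mul_pos hr (sub_pos.mpr h)]
  calc c * rexp (-(u - r - m) ^ 2 / (2 * σsq)) * (c * rexp (-(v - m) ^ 2 / (2 * σsq)))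
      = c * c * (rexp (-(u - r - m) ^ 2 / (2 * σsq)) * rexp (-(v - m) ^ 2 / (2 * σsq))) := by ring
    _ < c * c * (rexp (-(u - m) ^ 2 / (2 * σsq)) * rexp (-(v - r - m) ^ 2 / (2 * σsq))) :=
        mul_lt_mul_of_pos_left hE hc0
    _ = c * rexp (-(u - m) ^ 2 / (2 * σsq)) * (c * rexp (-(v - r - m) ^ 2 / (2 * σsq))) := by ring

/-- The CDF as a real set integral, abbreviation. -/
noncomputable def gaussCDF (s : ℝ) : ℝ := ∫ x in Iic s, gaussianPDFReal m σsq x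

lemma gaussCDF_pos (hσ : 0 < σsq) (s : ℝ) : 0 < gaussCDF m σsq s := by
  rw [gaussCDF, setIntegral_pos_iff_support_of_nonneg_ae
      (ae_of_all _ fun x => gaussianPDFReal_nonneg m σsq x)
      ((integrable_gaussianPDFReal m σsq).restrict)]
  have hsupp : Function.support (gaussianPDFReal m σsq) = univ := by
    ext x
    simp [Function.mem_support, (gaussianPDFReal_pos m σsq x hσ.ne').ne']
  rw [hsupp, univ_inter]
  simp [Real.volume_Iic]

lemma integral_Iic_comp_sub (f : ℝ → ℝ) (r a : ℝ) :
    ∫ x in Iic a, f (x - r) = ∫ x in Iic (a - r), f x := by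
  have hmp : MeasurePreserving (fun x : ℝ => x - r) volume volume :=
    measurePreserving_sub_right volume r
  have hemb : MeasurableEmbedding (fun x : ℝ => x - r) := by
    simpa [sub_eq_add_neg] using measurableEmbedding_addRight (-r)
  have himg : (fun x : ℝ => x - r) '' Iic a = Iic (a - r) := by
    ext x
    constructor
    · rintro ⟨y, hy, rfl⟩; simpa using sub_le_sub_right hy r
    · intro hx
      refine ⟨x + r, ?_, by ring⟩
      simp only [mem_Iic] at hx ⊢
      linarith
  rw [← himg, hmp.setIntegral_image_emb hemb]

lemma integral_Ioc_comp_sub (f : ℝ → ℝ) (r a b : ℝ) (hab : a ≤ b) :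
    ∫ x in Ioc a b, f (x - r) = ∫ x in Ioc (a - r) (b - r), f x := by
  rw [← intervalIntegral.integral_of_le hab, ← intervalIntegral.integral_of_le (by linarith),
    intervalIntegral.integral_comp_sub_right f r]

variable {m σsq}

lemma gaussCDF_diff (hσ : 0 < σsq) {a b : ℝ} (hab : a ≤ b) :
    ∫ x in Ioc a b, gaussianPDFReal m σsq x = gaussCDF m σsq b - gaussCDF m σsq a := by
  have h : gaussCDF m σsq a + ∫ x in Ioc a b, gaussianPDFReal m σsq x = gaussCDF m σsq b := by
    rw [gaussCDF, gaussCDF, ← setIntegral_union (Iic_disjoint_Ioc le_rfl) measurableSet_Ioc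
      ((integrable_gaussianPDFReal m σsq).restrict) ((integrable_gaussianPDFReal m σsq).restrict),
      Iic_union_Ioc_eq_Iic hab]
  linarith

/-- Key inequality. -/
lemma gauss_key (hσ : 0 < σsq) (r : ℝ) (hr : 0 < r) {a b : ℝ} (hab : a < b) :
    gaussCDF m σsq (a - r) * gaussCDF m σsq b < gaussCDF m σsq (b - r) * gaussCDF m σsq a := by
  set φ := gaussianPDFReal m σsq with hφ
  set Φ := gaussCDF m σsq with hΦ
  have hint : Integrable φ := integrable_gaussianPDFReal m σsq
  have hintr : Integrable (fun x => φ (x - r)) := hint.comp_sub_right r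
  have hφpos : ∀ x, 0 < φ x := fun x => gaussianPDFReal_pos m σsq x hσ.ne'
  have hΦpos : ∀ s, 0 < Φ s := gaussCDF_pos m σsq hσ
  -- pointwise: Φ(a-r) * φ v < Φ a * φ (v - r) for v > a
  have hpt : ∀ v, a < v → Φ (a - r) * φ v < Φ a * φ (v - r) := by
    intro v hv
    have hA : φ a * Φ (a - r) ≤ φ (a - r) * Φ a := by
      have h1 : Φ (a - r) = ∫ u in Iic a, φ (u - r) := (integral_Iic_comp_sub φ r a).symm
      have h2 : φ a * Φ (a - r) = ∫ u in Iic a, φ (u - r) * φ a := by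
        rw [h1, mul_comm, ← integral_mul_const]
      have h3 : φ (a - r) * Φ a = ∫ u in Iic a, φ u * φ (a - r) := by
        rw [hΦ, gaussCDF, mul_comm, ← integral_mul_const]
      rw [h2, h3]
      refine setIntegral_mono_on ((hintr.mul_const _).integrableOn)
        ((hint.mul_const _).integrableOn) measurableSet_Iic ?_
      intro u hu
      exact gauss_tp2_le m σsq hσ r hr (mem_Iic.mp hu)
    have hB : φ (a - r) * φ v < φ a * φ (v - r) := gauss_tp2_lt m σsq hσ r hr hv
    have hφa := hφpos a
    have hΦa := hΦpos a
    have h1 : φ a * Φ (a - r) * φ v ≤ φ (a - r) * Φ a * φ v :=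
      mul_le_mul_of_nonneg_right hA (hφpos v).le
    have h2 : Φ a * (φ (a - r) * φ v) < Φ a * (φ a * φ (v - r)) :=
      mul_lt_mul_of_pos_left hB hΦa
    nlinarith [h1, h2, hφa]
  -- integrate over Ioc a b
  have hIc : Continuous φ := by
    rw [hφ, gaussianPDFReal_def]
    fun_prop
  have hgpos : ∀ v ∈ Ioc a b, 0 < Φ a * φ (v - r) - Φ (a - r) * φ v := fun v hv =>
    sub_pos.mpr (hpt v hv.1)
  have hint1 : IntegrableOn (fun v => Φ a * φ (v - r) - Φ (a - r) * φ v) (Ioc a b) := by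
    exact (((hintr.const_mul _).sub (hint.const_mul _))).integrableOn
  have hpos : 0 < ∫ v in Ioc a b, (Φ a * φ (v - r) - Φ (a - r) * φ v) := by
    rw [setIntegral_pos_iff_support_of_nonneg_ae ?_ hint1]
    · have hsub : Ioc a b ⊆ Function.support (fun v => Φ a * φ (v - r) - Φ (a - r) * φ v) :=
        fun v hv => (hgpos v hv).ne'
      refine lt_of_lt_of_le ?_ (measure_mono (subset_inter hsub Subset.rfl))
      rw [Real.volume_Ioc]
      simp [hab]
    · filter_upwards [ae_restrict_mem measurableSet_Ioc] with v hv
      exact (hgpos v hv).le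
  have hsplit : ∫ v in Ioc a b, (Φ a * φ (v - r) - Φ (a - r) * φ v)
      = Φ a * (Φ (b - r) - Φ (a - r)) - Φ (a - r) * (Φ b - Φ a) := by
    rw [integral_sub ((hintr.const_mul _).integrableOn) ((hint.const_mul _).integrableOn),
      integral_const_mul, integral_const_mul, integral_Ioc_comp_sub φ r a b hab.le,
      gaussCDF_diff hσ (by linarith : a - r ≤ b - r), gaussCDF_diff hσ hab.le]
  rw [hsplit] at hpos
  nlinarith

end Aux

/-- Lemma 5.16 (l.normal monotonicity): for a normal random variable `X` with mean `m`
and variance `σ² > 0` and fixed `r > 0`, the conditional probability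
`P(X ≥ s - r | X ≤ s)`, i.e. the ratio `μ([s - r, s]) / μ((-∞, s])` for the Gaussian
measure `μ`, is strictly decreasing in `s`. -/
theorem gaussian_conditional_ratio_strictly_decreasing
    (r : ℝ) (hr : 0 < r) (m : ℝ) (σsq : NNReal) (hσ : 0 < σsq) :
    ∀ s₁ s₂ : ℝ, s₁ < s₂ →
      ((gaussianReal m σsq) (Icc (s₂ - r) s₂)).toReal
          / ((gaussianReal m σsq) (Iic s₂)).toReal
        < ((gaussianReal m σsq) (Icc (s₁ - r) s₁)).toReal
          / ((gaussianReal m σsq) (Iic s₁)).toReal := by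
  intro s₁ s₂ h12
  have hΦpos : ∀ s, 0 < gaussCDF m σsq s := gaussCDF_pos m σsq hσ
  have hmeas : ∀ s : ℝ, ((gaussianReal m σsq) (Iic s)).toReal = gaussCDF m σsq s := by
    intro s
    rw [gaussianReal_apply_eq_integral m hσ.ne' (Iic s),
      ENNReal.toReal_ofReal (setIntegral_nonneg measurableSet_Iic
        fun x _ => gaussianPDFReal_nonneg m σsq x)]
    rfl
  have hmeas2 : ∀ s : ℝ, ((gaussianReal m σsq) (Icc (s - r) s)).toReal
      = gaussCDF m σsq s - gaussCDF m σsq (s - r) := by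
    intro s
    rw [gaussianReal_apply_eq_integral m hσ.ne' (Icc (s - r) s),
      ENNReal.toReal_ofReal (setIntegral_nonneg measurableSet_Icc
        fun x _ => gaussianPDFReal_nonneg m σsq x),
      integral_Icc_eq_integral_Ioc, gaussCDF_diff hσ (by linarith : s - r ≤ s)]
  rw [hmeas, hmeas, hmeas2, hmeas2]
  rw [div_lt_div_iff₀ (hΦpos s₂) (hΦpos s₁)]
  have hkey := gauss_key (m := m) hσ r hr h12
  nlinarith [hΦpos s₁, hΦpos s₂]
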